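/- For α > 0 and r > 0, the modified Bessel function of the second kind satisfies K_α(r) = r^(−α) 2^(α−1) ∫₀^∞ u^(α−1) e^(−u) e^(−r²/(4u)) du. -/

import Mathlib

open MeasureTheory Real Set

/-- The modified Bessel function of the second kind of order `α`. -/
noncomputable def besselK (α x : ℝ) : ℝ :=
  ∫ t in Ioi (0 : ℝ), Real.exp (-(x * Real.cosh t)) * Real.cosh (α * t)

lemma cosh_quad (t : ℝ) : t ^ 2 / 8 ≤ Real.cosh t := by
  have h1 := Real.add_one_le_exp (t / 2)
  have h2 := Real.add_one_le_exp (-t / 2)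
  have e1 : Real.exp t = Real.exp (t / 2) * Real.exp (t / 2) := by
    rw [← Real.exp_add]; ring_nf
  have e2 : Real.exp (-t) = Real.exp (-t / 2) * Real.exp (-t / 2) := by
    rw [← Real.exp_add]; ring_nf
  have p1 := Real.exp_pos t
  have p2 := Real.exp_pos (-t)
  rw [Real.cosh_eq]
  rcases le_or_gt 0 t with ht | ht
  · nlinarith [sq_nonneg (t/2 + 1), Real.exp_pos (t/2)]
  · nlinarith [sq_nonneg (-t/2 + 1), Real.exp_pos (-t/2)]

lemma integrableOn_aux (β : ℝ) {r : ℝ} (hr : 0 < r) :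
    IntegrableOn (fun t => Real.exp (β * t) * Real.exp (-(r * Real.cosh t))) (Ioi (0:ℝ)) := by
  have hcont : Continuous fun t => Real.exp (β * t) * Real.exp (-(r * Real.cosh t)) := by
    continuity
  refine Integrable.mono' ((exp_neg_integrableOn_Ioi 0 one_pos).const_mul
    (Real.exp (2 * (β + 1) ^ 2 / r))) hcont.aestronglyMeasurable ?_
  refine (ae_restrict_iff' measurableSet_Ioi).2 (Filter.Eventually.of_forall fun t ht => ?_)
  have hq := cosh_quad t
  rw [Real.norm_eq_abs, abs_of_pos (by positivity), ← Real.exp_add, ← Real.exp_add]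
  apply Real.exp_le_exp.2
  have ht' : (0:ℝ) < t := ht
  have hreq : r * (2 * (β + 1) ^ 2 / r) = 2 * (β + 1) ^ 2 := by field_simp
  nlinarith [sq_nonneg (r * t / 4 - (β + 1)),
    mul_le_mul_of_nonneg_left hq (mul_nonneg hr.le hr.le), hr]

lemma integrableOn_aux_Iic (β : ℝ) {r : ℝ} (hr : 0 < r) :
    IntegrableOn (fun t => Real.exp (β * t) * Real.exp (-(r * Real.cosh t))) (Iic (0:ℝ)) := by
  have hcont : Continuous fun t => Real.exp (β * t) * Real.exp (-(r * Real.cosh t)) := by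
    continuity
  refine Integrable.mono' ((integrableOn_exp_Iic 0).const_mul
    (Real.exp (2 * (β - 1) ^ 2 / r))) hcont.aestronglyMeasurable ?_
  refine (ae_restrict_iff' measurableSet_Iic).2 (Filter.Eventually.of_forall fun t ht => ?_)
  have hq := cosh_quad t
  rw [Real.norm_eq_abs, abs_of_pos (by positivity), ← Real.exp_add, ← Real.exp_add]
  apply Real.exp_le_exp.2
  have ht' : t ≤ 0 := ht
  have hreq : r * (2 * (β - 1) ^ 2 / r) = 2 * (β - 1) ^ 2 := by field_simp
  nlinarith [sq_nonneg (r * t / 4 - (β - 1)),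
    mul_le_mul_of_nonneg_left hq (mul_nonneg hr.le hr.le), hr]

lemma line_eq (α : ℝ) {r : ℝ} (hr : 0 < r) :
    ∫ t : ℝ, Real.exp (α * t) * Real.exp (-(r * Real.cosh t)) = 2 * besselK α r := by
  have hIic := integrableOn_aux_Iic α hr
  have hIoi := integrableOn_aux α hr
  have hIoi' := integrableOn_aux (-α) hr
  rw [← intervalIntegral.integral_Iic_add_Ioi hIic hIoi]
  have hrefl : (∫ t in Iic (0:ℝ), Real.exp (α * t) * Real.exp (-(r * Real.cosh t)))
      = ∫ t in Ioi (0:ℝ), Real.exp (-α * t) * Real.exp (-(r * Real.cosh t)) := by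
    have := integral_comp_neg_Iic (0:ℝ)
      (fun t => Real.exp (-α * t) * Real.exp (-(r * Real.cosh t)))
    simp only [neg_zero] at this
    rw [← this]
    congr 1
    funext t
    rw [Real.cosh_neg]
    ring_nf
  rw [hrefl, ← MeasureTheory.integral_add hIoi' hIoi]
  unfold besselK
  rw [← MeasureTheory.integral_const_mul]
  congr 1
  funext t
  rw [Real.cosh_eq (α * t), show -(α * t) = -α * t by ring]
  ring

lemma subst_eq (α : ℝ) {r : ℝ} (hr : 0 < r) :
    ∫ u in Ioi (0:ℝ), u ^ (α - 1) * Real.exp (-u) * Real.exp (-(r ^ 2) / (4 * u))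
      = (r / 2) ^ α * ∫ t : ℝ, Real.exp (α * t) * Real.exp (-(r * Real.cosh t)) := by
  have himg : (fun t : ℝ => r / 2 * Real.exp t) '' univ = Ioi 0 := by
    rw [image_univ]
    ext u
    simp only [mem_range, mem_Ioi]
    constructor
    · rintro ⟨t, rfl⟩; positivity
    · intro hu
      refine ⟨Real.log (u / (r / 2)), ?_⟩
      rw [Real.exp_log (by positivity)]
      field_simp
  have hderiv : ∀ x ∈ (univ : Set ℝ),
      HasDerivWithinAt (fun t : ℝ => r / 2 * Real.exp t) (r / 2 * Real.exp x) univ x :=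
    fun x _ => ((Real.hasDerivAt_exp x).const_mul (r / 2)).hasDerivWithinAt
  have hinj : InjOn (fun t : ℝ => r / 2 * Real.exp t) univ := fun a _ b _ h =>
    Real.exp_injective (mul_left_cancel₀ (by positivity) h)
  have := MeasureTheory.integral_image_eq_integral_abs_deriv_smul MeasurableSet.univ hderiv hinj
    (fun u => u ^ (α - 1) * Real.exp (-u) * Real.exp (-(r ^ 2) / (4 * u)))
  rw [himg, MeasureTheory.setIntegral_univ] at this
  rw [this, ← MeasureTheory.integral_const_mul]
  congr 1
  funext x
  have hex : (0:ℝ) < r / 2 * Real.exp x := by positivity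
  rw [smul_eq_mul, abs_of_pos hex, Real.rpow_sub_one hex.ne' α,
    Real.mul_rpow (by positivity) (Real.exp_pos x).le, ← Real.exp_mul, Real.cosh_eq,
    mul_comm x α]
  have hA : Real.exp (-(r / 2 * Real.exp x)) * Real.exp (-r ^ 2 / (4 * (r / 2 * Real.exp x)))
      = Real.exp (-(r * ((Real.exp x + Real.exp (-x)) / 2))) := by
    rw [← Real.exp_add]
    congr 1
    rw [Real.exp_neg]
    field_simp
    ring
  rw [← hA]
  field_simp


theorem besselK_integral_representation (α r : ℝ) (hα : 0 < α) (hr : 0 < r) :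
    besselK α r =
      r ^ (-α) * 2 ^ (α - 1) *
        ∫ u in Ioi (0 : ℝ), u ^ (α - 1) * Real.exp (-u) * Real.exp (-(r ^ 2) / (4 * u)) := by
  rw [subst_eq α hr, line_eq α hr]
  have h1 : (0:ℝ) < r ^ α := Real.rpow_pos_of_pos hr α
  have h2 : (0:ℝ) < (2:ℝ) ^ α := Real.rpow_pos_of_pos two_pos α
  rw [Real.rpow_neg hr.le, Real.rpow_sub two_pos,
    Real.div_rpow hr.le (by norm_num : (0:ℝ) ≤ 2), Real.rpow_one]
  field_simp
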